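/- arXiv:1611.04638 — 2 statements merged into one kernel-verified Lean document; each statement's English description precedes it below -/
import Mathlib

section
/- (Piecewise formula for CR_b, from the proof of Lemma 2.) Fix an integer n ≥ 1, σ > 0, α ∈ (0,1), θ > 0 and ν ≥ 0, and let μ = N(θ, σ²/n). Then μ({x ∈ ℝ : |x − θ| < z_{α/2}·σ/√n and |x| > ν}) = CR_b(θ, ν), where CR_b(θ, ν) = (P_s(θ,ν) − α)·1{ν < z_{α/2}σ/√n} if θ < |ν − z_{α/2}σ/√n|; CR_b(θ, ν) = 1 − α/2 − Φ(√n(ν − θ)/σ) if |ν − z_{α/2}σ/√n| ≤ θ ≤ ν + z_{α/2}σ/√n; and CR_b(θ, ν) = 1 − α if θ > ν + z_{α/2}σ/√n. -/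
open MeasureTheory ProbabilityTheory

/-- The standard normal cumulative distribution function. -/
noncomputable def Phi (x : ℝ) : ℝ := (gaussianReal 0 1 (Set.Iic x)).toReal

/-- P_s(θ,ν) = Φ(√n(θ − ν)/σ) + Φ(√n(−θ − ν)/σ). -/
noncomputable def Ps (n : ℕ) (σ θ ν : ℝ) : ℝ :=
  Phi (Real.sqrt n * (θ - ν) / σ) + Phi (Real.sqrt n * (-θ - ν) / σ)

/-- σ̃(θ) = (1 + λ/θ²)⁻¹ σ for θ ≠ 0, with the convention σ̃(0) = 0. -/
noncomputable def sigTilde (lam σ θ : ℝ) : ℝ :=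
  if θ = 0 then 0 else (1 + lam / θ ^ 2)⁻¹ * σ

open Classical in
/-- The piecewise function CR_a(θ,ν); here `za` denotes the quantile z_{α/2}. -/
noncomputable def CRa (n : ℕ) (σ lam za θ ν : ℝ) : ℝ :=
  if θ < |ν - za * sigTilde lam σ θ / Real.sqrt n| then
    (Ps n σ θ ν - 2 * Phi (-(za * sigTilde lam σ θ / σ))) *
      (if ν < za * sigTilde lam σ θ / Real.sqrt n then 1 else 0)
  else if θ ≤ ν + za * sigTilde lam σ θ / Real.sqrt n then
    Phi (za * sigTilde lam σ θ / σ) - Phi (Real.sqrt n * (ν - θ) / σ)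
  else 1 - 2 * Phi (-(za * sigTilde lam σ θ / σ))

open Classical in
/-- The piecewise function CR_b(θ,ν); here `za` denotes the quantile z_{α/2}. -/
noncomputable def CRb (n : ℕ) (σ α za θ ν : ℝ) : ℝ :=
  if θ < |ν - za * σ / Real.sqrt n| then
    (Ps n σ θ ν - α) * (if ν < za * σ / Real.sqrt n then 1 else 0)
  else if θ ≤ ν + za * σ / Real.sqrt n then
    1 - α / 2 - Phi (Real.sqrt n * (ν - θ) / σ)
  else 1 - α

lemma Phi_mono : Monotone Phi := fun x y hxy =>
  ENNReal.toReal_mono (measure_ne_top _ _) (measure_mono (Set.Iic_subset_Iic.mpr hxy))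

instance : NullSingletonClass (gaussianReal (0:ℝ) 1) :=
  ⟨fun x => gaussianReal_absolutelyContinuous 0 one_ne_zero (measure_singleton x)⟩

lemma gauss_map_neg : (gaussianReal (0:ℝ) 1).map (fun y => (-1:ℝ) * y) = gaussianReal 0 1 := by
  rw [gaussianReal_map_const_mul]
  congr 1
  · norm_num
  · apply NNReal.coe_injective; norm_num

lemma Phi_neg (x : ℝ) : Phi (-x) = 1 - Phi x := by
  have hpre : (fun y => (-1:ℝ) * y) ⁻¹' (Set.Iic (-x)) = Set.Ici x := by
    ext y
    simp only [Set.mem_preimage, Set.mem_Iic, Set.mem_Ici]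
    constructor <;> intro h <;> linarith
  have h1 : Phi (-x) = ((gaussianReal (0:ℝ) 1) (Set.Ici x)).toReal := by
    rw [Phi]
    nth_rewrite 1 [← gauss_map_neg]
    rw [Measure.map_apply (by fun_prop) measurableSet_Iic, hpre]
  rw [h1, measure_congr (Ioi_ae_eq_Ici (μ := gaussianReal (0:ℝ) 1)).symm, ← Set.compl_Iic,
    measure_compl measurableSet_Iic (measure_ne_top _ _), measure_univ,
    ENNReal.toReal_sub_of_le prob_le_one (by simp), ENNReal.toReal_one, Phi]

lemma stdN_Ioo {a b : ℝ} (hab : a ≤ b) :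
    ((gaussianReal (0:ℝ) 1) (Set.Ioo a b)).toReal = Phi b - Phi a := by
  rw [measure_congr (Ioo_ae_eq_Ioc (μ := gaussianReal (0:ℝ) 1)), ← Set.Iic_sdiff_Iic,
    measure_diff (Set.Iic_subset_Iic.mpr hab) measurableSet_Iic.nullMeasurableSet
      (measure_ne_top _ _),
    ENNReal.toReal_sub_of_le (measure_mono (Set.Iic_subset_Iic.mpr hab)) (measure_ne_top _ _),
    Phi, Phi]

lemma gauss_map_affine (s θ : ℝ) :
    (gaussianReal (0:ℝ) 1).map (fun x => s * x + θ) = gaussianReal θ ⟨s^2, sq_nonneg s⟩ := by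
  have h : (fun x : ℝ => s * x + θ) = (· + θ) ∘ (s * ·) := rfl
  rw [h, ← Measure.map_map (measurable_add_const θ) (measurable_const_mul s),
    gaussianReal_map_const_mul, gaussianReal_map_add_const]
  congr 1
  · ring
  · apply NNReal.coe_injective; rw [mul_one]; rfl

lemma gauss_Ioo (θ s : ℝ) (hs : 0 < s) {u v : ℝ} (huv : u ≤ v) :
    ((gaussianReal θ ⟨s^2, sq_nonneg s⟩) (Set.Ioo u v)).toReal
      = Phi ((v - θ)/s) - Phi ((u - θ)/s) := by
  rw [← gauss_map_affine s θ, Measure.map_apply (by fun_prop) measurableSet_Ioo]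
  have hpre : (fun x => s * x + θ) ⁻¹' Set.Ioo u v = Set.Ioo ((u - θ)/s) ((v - θ)/s) := by
    ext x
    simp only [Set.mem_preimage, Set.mem_Ioo, div_lt_iff₀ hs, lt_div_iff₀ hs]
    constructor <;> rintro ⟨h1, h2⟩ <;> constructor <;> nlinarith
  rw [hpre, stdN_Ioo (by gcongr)]

/-- piecewise formula for CR_b: the N(θ, σ²/n)-probability of the event
{|x − θ| < z_{α/2}σ/√n and |x| > ν} equals CR_b(θ, ν). -/
theorem CRb_eq_prob (n : ℕ) (hn : 1 ≤ n) (σ α za θ ν : ℝ)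
    (hσ : 0 < σ) (hα : α ∈ Set.Ioo (0:ℝ) 1)
    (hza : Phi (-za) = α / 2) (hθ : 0 < θ) (hν : 0 ≤ ν) :
    ((gaussianReal θ (Real.toNNReal (σ^2 / n)))
        {x : ℝ | |x - θ| < za * σ / Real.sqrt n ∧ ν < |x|}).toReal
      = CRb n σ α za θ ν := by
  obtain ⟨hα0, hα1⟩ := hα
  have hn0 : (0:ℝ) < (n:ℝ) := by exact_mod_cast hn
  have hrn : (0:ℝ) < Real.sqrt n := Real.sqrt_pos.mpr hn0
  set s : ℝ := σ / Real.sqrt n with hs_def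
  have hs : 0 < s := div_pos hσ hrn
  set c : ℝ := za * σ / Real.sqrt n with hc_def
  have hcs : c = za * s := by rw [hc_def, hs_def, mul_div_assoc]
  -- z_{α/2} is positive
  have hPhi0 : Phi 0 = 1/2 := by have := Phi_neg 0; rw [neg_zero] at this; linarith
  have hza_pos : 0 < za := by
    by_contra h
    push_neg at h
    have : Phi 0 ≤ Phi (-za) := Phi_mono (by linarith)
    rw [hza, hPhi0] at this
    linarith
  have hc_pos : 0 < c := by rw [hcs]; positivity
  have hPhiza : Phi za = 1 - α / 2 := by have := Phi_neg za; linarith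
  -- variance identification
  have hV : Real.toNNReal (σ^2 / n) = (⟨s^2, sq_nonneg s⟩ : NNReal) := by
    apply NNReal.coe_injective
    rw [Real.coe_toNNReal _ (by positivity)]
    show σ ^ 2 / (n:ℝ) = s ^ 2
    rw [hs_def, div_pow, Real.sq_sqrt hn0.le]
  -- argument conversions
  have key : ∀ x : ℝ, x / s = Real.sqrt n * x / σ := by
    intro x
    rw [hs_def]
    field_simp
  rw [hV]
  simp only [CRb, Ps, ← hc_def]
  by_cases h1 : θ < |ν - c|
  · rw [if_pos h1]
    by_cases h2 : ν < c
    · rw [if_pos h2, mul_one]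
      have habs : |ν - c| = c - ν := by rw [abs_of_neg (by linarith)]; ring
      rw [habs] at h1
      have hset : {x : ℝ | |x - θ| < c ∧ ν < |x|}
          = Set.Ioo (θ - c) (-ν) ∪ Set.Ioo ν (θ + c) := by
        ext x
        simp only [Set.mem_setOf_eq, Set.mem_union, Set.mem_Ioo, abs_lt, lt_abs]
        constructor
        · rintro ⟨⟨ha, hb⟩, (h | h)⟩
          · right; exact ⟨h, by linarith⟩
          · left; exact ⟨by linarith, by linarith⟩
        · rintro (⟨ha, hb⟩ | ⟨ha, hb⟩)
          · exact ⟨⟨by linarith, by linarith⟩, Or.inr (by linarith)⟩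
          · exact ⟨⟨by linarith, by linarith⟩, Or.inl (by linarith)⟩
      have hdisj : Disjoint (Set.Ioo (θ - c) (-ν)) (Set.Ioo ν (θ + c)) := by
        rw [Set.disjoint_left]
        rintro x ⟨_, hb⟩ ⟨ha', _⟩
        linarith
      haveI := instIsProbabilityMeasureGaussianReal θ ⟨s^2, sq_nonneg s⟩
      rw [hset, measure_union hdisj measurableSet_Ioo,
        ENNReal.toReal_add (measure_ne_top _ _) (measure_ne_top _ _),
        gauss_Ioo θ s hs (by linarith), gauss_Ioo θ s hs (by linarith)]
      have e1 : (-ν - θ) / s = Real.sqrt n * (-θ - ν) / σ := by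
        rw [← key]; ring_nf
      have e2 : (θ + c - θ) / s = za := by
        rw [hcs]; field_simp; ring
      have e3 : (θ - c - θ) / s = -za := by
        rw [hcs]; field_simp; ring
      have e4 : (ν - θ) / s = -(Real.sqrt n * (θ - ν) / σ) := by
        rw [← key]; field_simp; ring
      rw [e1, e2, e3, e4, Phi_neg, Phi_neg]
      linarith
    · rw [if_neg h2, mul_zero]
      push_neg at h2
      have habs : |ν - c| = ν - c := abs_of_nonneg (by linarith)
      rw [habs] at h1
      have hset : {x : ℝ | |x - θ| < c ∧ ν < |x|} = (∅ : Set ℝ) := by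
        ext x
        simp only [Set.mem_setOf_eq, Set.mem_empty_iff_false, iff_false, not_and, abs_lt, lt_abs,
          not_or, not_lt]
        rintro ⟨ha, hb⟩
        constructor <;> linarith
      rw [hset]
      simp
  · rw [if_neg h1]
    push_neg at h1
    have hl : c - ν ≤ θ := le_trans (by rw [abs_sub_comm] at h1 ⊢; exact le_abs_self _) h1
    have hl' : ν - c ≤ θ := le_trans (le_abs_self _) h1
    by_cases h2 : θ ≤ ν + c
    · rw [if_pos h2]
      have hset : {x : ℝ | |x - θ| < c ∧ ν < |x|} = Set.Ioo ν (θ + c) := by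
        ext x
        simp only [Set.mem_setOf_eq, Set.mem_Ioo, abs_lt, lt_abs]
        constructor
        · rintro ⟨⟨ha, hb⟩, (h | h)⟩
          · exact ⟨h, by linarith⟩
          · linarith
        · rintro ⟨ha, hb⟩
          exact ⟨⟨by linarith, by linarith⟩, Or.inl ha⟩
      rw [hset, gauss_Ioo θ s hs (by linarith)]
      have e2 : (θ + c - θ) / s = za := by rw [hcs]; field_simp; ring
      have e4 : (ν - θ) / s = Real.sqrt n * (ν - θ) / σ := key _
      rw [e2, e4, hPhiza]
    · rw [if_neg h2]
      push_neg at h2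
      have hset : {x : ℝ | |x - θ| < c ∧ ν < |x|} = Set.Ioo (θ - c) (θ + c) := by
        ext x
        simp only [Set.mem_setOf_eq, Set.mem_Ioo, abs_lt, lt_abs]
        constructor
        · rintro ⟨⟨ha, hb⟩, _⟩
          exact ⟨by linarith, by linarith⟩
        · rintro ⟨ha, hb⟩
          exact ⟨⟨by linarith, by linarith⟩, Or.inl (by linarith)⟩
      rw [hset, gauss_Ioo θ s hs (by linarith)]
      have e2 : (θ + c - θ) / s = za := by rw [hcs]; field_simp; ring
      have e3 : (θ - c - θ) / s = -za := by rw [hcs]; field_simp; ring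
      rw [e2, e3, hza]
      linarith
end

section
/- (Theorem 1, part (a).) Fix an integer n ≥ 1, σ > 0, α, τ ∈ (0,1) satisfying (C1) τ ≥ α and (C2) τ < 2Φ(−z_{α/2}/2) − α, and λ > 0 with z_{α/2}σ/√n < √λ < (z_{α/2} + z_{τ/2})σ/√n. Let c_1 > 0 be a solution of θ = √λ − z_{α/2}σ̃(θ)/√n. Then for every θ ∈ [0, c_1], the difference Δ(θ) = CR(θ) − CR_1(θ) satisfies Δ(θ) ≥ 1 − α/τ; in particular Δ(θ) > 0 whenever τ > α. -/
open MeasureTheory ProbabilityTheory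

/-- CR₁(θ) = CR_a(θ, ν₀)/P_s(θ, ν₀) with ν₀ = √λ: the conditional coverage
probability of the asymptotic-based confidence interval. -/
noncomputable def CR1 (n : ℕ) (σ lam za θ : ℝ) : ℝ :=
  CRa n σ lam za θ (Real.sqrt lam) / Ps n σ θ (Real.sqrt lam)

/-- CR(θ) = (CR_b(θ,ν₁) + CR_a(θ,ν₂) − CR_b(θ,ν₂))/P_s(θ,ν₁) with
ν₁ = z_{τ/2}σ/√n and ν₂ = √λ + z_{α/2}σ/√n: the conditional coverage probability
of the two-step confidence interval. Here `za` = z_{α/2} and `zt` = z_{τ/2}. -/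
noncomputable def CRtwo (n : ℕ) (σ lam α za zt θ : ℝ) : ℝ :=
  (CRb n σ α za θ (zt * σ / Real.sqrt n)
    + CRa n σ lam za θ (Real.sqrt lam + za * σ / Real.sqrt n)
    - CRb n σ α za θ (Real.sqrt lam + za * σ / Real.sqrt n))
  / Ps n σ θ (zt * σ / Real.sqrt n)

/-- Δ(θ) = CR(θ) − CR₁(θ). -/
noncomputable def Delta (n : ℕ) (σ lam α za zt θ : ℝ) : ℝ :=
  CRtwo n σ lam α za zt θ - CR1 n σ lam za θ

private lemma Phi_eq_integral (x : ℝ) :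
    Phi x = ∫ t in Set.Iic x, gaussianPDFReal 0 1 t := by
  rw [Phi, gaussianReal_apply_eq_integral 0 one_ne_zero,
    ENNReal.toReal_ofReal (integral_nonneg fun t => gaussianPDFReal_nonneg 0 1 t)]

private lemma Phi_sub_Phi (a b : ℝ) :
    Phi b - Phi a = ∫ t in a..b, gaussianPDFReal 0 1 t := by
  rw [Phi_eq_integral, Phi_eq_integral]
  exact intervalIntegral.integral_Iic_sub_Iic
    ((integrable_gaussianPDFReal 0 1).integrableOn)
    ((integrable_gaussianPDFReal 0 1).integrableOn)

private lemma Phi_strictMono : StrictMono Phi := by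
  intro a b hab
  have h := Phi_sub_Phi a b
  have hpos : 0 < ∫ t in a..b, gaussianPDFReal 0 1 t :=
    intervalIntegral.intervalIntegral_pos_of_pos ((integrable_gaussianPDFReal 0 1).intervalIntegrable)
      (fun x => gaussianPDFReal_pos 0 1 x one_ne_zero) hab
  linarith

private lemma Phi_nonneg (x : ℝ) : 0 ≤ Phi x := ENNReal.toReal_nonneg

private lemma Phi_pos (x : ℝ) : 0 < Phi x :=
  (Phi_nonneg (x - 1)).trans_lt (Phi_strictMono (sub_one_lt x))

private lemma gauss_even (x : ℝ) : gaussianPDFReal 0 1 (-x) = gaussianPDFReal 0 1 x := by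
  simp [gaussianPDFReal, sub_zero, neg_sq]

private lemma Phi_add_Phi_neg (x : ℝ) : Phi x + Phi (-x) = 1 := by
  have h1 : Phi (-x) = ∫ t in Set.Ioi x, gaussianPDFReal 0 1 t := by
    rw [Phi_eq_integral]
    have h2 : ∫ t in Set.Iic (-x), gaussianPDFReal 0 1 t
        = ∫ t in Set.Iic (-x), gaussianPDFReal 0 1 (-t) :=
      setIntegral_congr_fun measurableSet_Iic (fun t _ => (gauss_even t).symm)
    rw [h2, integral_comp_neg_Iic, neg_neg]
  rw [Phi_eq_integral x, h1,
    intervalIntegral.integral_Iic_add_Ioi ((integrable_gaussianPDFReal 0 1).integrableOn)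
      ((integrable_gaussianPDFReal 0 1).integrableOn),
    integral_gaussianPDFReal_eq_one 0 one_ne_zero]

private lemma Phi_zero : Phi 0 = 1/2 := by
  have := Phi_add_Phi_neg 0
  rw [neg_zero] at this; linarith

private lemma gauss_le {x y : ℝ} (h : x^2 ≤ y^2) :
    gaussianPDFReal 0 1 y ≤ gaussianPDFReal 0 1 x := by
  simp only [gaussianPDFReal, sub_zero, NNReal.coe_one, mul_one]
  gcongr

private lemma Phi_key {v z : ℝ} (hv : 0 ≤ v) (hz : 0 ≤ z) :
    2 * Phi (-z) ≤ Phi (v - z) + Phi (-v - z) := by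
  have h1 : Phi (-z) - Phi (-v - z) = ∫ t in (-v - z)..(-z), gaussianPDFReal 0 1 t :=
    Phi_sub_Phi _ _
  have h2 : Phi (v - z) - Phi (-z) = ∫ t in (-z)..(v - z), gaussianPDFReal 0 1 t :=
    Phi_sub_Phi _ _
  have hfun : (fun t => gaussianPDFReal 0 1 (-(2*z) - t))
      = fun t => gaussianPDFReal 0 1 (t + 2*z) :=
    funext fun t => by rw [show -(2*z) - t = -(t + 2*z) by ring, gauss_even]
  have h3 : (∫ t in (-v - z)..(-z), gaussianPDFReal 0 1 t)
      = ∫ t in (-z)..(v - z), gaussianPDFReal 0 1 (t + 2*z) := by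
    rw [← hfun, intervalIntegral.integral_comp_sub_left (gaussianPDFReal 0 1) (-(2*z))]
    congr 1 <;> ring
  have h4 : (∫ t in (-z)..(v - z), gaussianPDFReal 0 1 (t + 2*z))
      ≤ ∫ t in (-z)..(v - z), gaussianPDFReal 0 1 t := by
    apply intervalIntegral.integral_mono_on (by linarith)
      (((integrable_gaussianPDFReal 0 1).comp_add_right (2*z)).intervalIntegrable)
      ((integrable_gaussianPDFReal 0 1).intervalIntegrable)
    intro t ht
    exact gauss_le (by nlinarith [ht.1, ht.2])
  linarith

private lemma sigTilde_nonneg {lam σ : ℝ} (hσ : 0 ≤ σ) (hlam : 0 ≤ lam) (θ : ℝ) :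
    0 ≤ sigTilde lam σ θ := by
  rw [sigTilde]; split
  · exact le_refl 0
  · positivity

private lemma sigTilde_pos {lam σ : ℝ} (hσ : 0 < σ) (hlam : 0 ≤ lam) {θ : ℝ} (hθ : θ ≠ 0) :
    0 < sigTilde lam σ θ := by
  rw [sigTilde, if_neg hθ]; positivity

private lemma sigTilde_le {lam σ : ℝ} (hσ : 0 ≤ σ) (hlam : 0 ≤ lam) (θ : ℝ) :
    sigTilde lam σ θ ≤ σ := by
  rw [sigTilde]; split
  · exact hσ
  · have h1 : (1:ℝ) ≤ 1 + lam / θ^2 := le_add_of_nonneg_right (by positivity)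
    calc (1 + lam / θ^2)⁻¹ * σ ≤ 1 * σ := by
          apply mul_le_mul_of_nonneg_right _ hσ
          rw [show (1:ℝ) = (1:ℝ)⁻¹ by norm_num]
          exact inv_anti₀ one_pos (by rw [inv_one]; exact h1)
      _ = σ := one_mul σ

private lemma sigTilde_mono {lam σ : ℝ} (hσ : 0 ≤ σ) (hlam : 0 ≤ lam) {a b : ℝ}
    (ha : 0 ≤ a) (hab : a ≤ b) : sigTilde lam σ a ≤ sigTilde lam σ b := by
  rcases eq_or_lt_of_le ha with h0 | h0
  · rw [show sigTilde lam σ a = 0 by rw [sigTilde, if_pos h0.symm]]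
    exact sigTilde_nonneg hσ hlam b
  · have hb : 0 < b := lt_of_lt_of_le h0 hab
    rw [sigTilde, sigTilde, if_neg (ne_of_gt h0), if_neg (ne_of_gt hb)]
    apply mul_le_mul_of_nonneg_right _ hσ
    apply inv_anti₀ (by positivity)
    have h2 : a^2 ≤ b^2 := by nlinarith
    have : lam / b^2 ≤ lam / a^2 := div_le_div_of_nonneg_left hlam (by positivity) h2
    linarith

set_option maxHeartbeats 1000000 in
/-- Theorem 1, part (a): under (C1) τ ≥ α, (C2) τ < 2Φ(−z_{α/2}/2) − α
and z_{α/2}σ/√n < √λ < (z_{α/2} + z_{τ/2})σ/√n, for every θ ∈ [0, c₁] we have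
Δ(θ) ≥ 1 − α/τ; in particular Δ(θ) > 0 whenever τ > α. -/
theorem theorem1_part_a (n : ℕ) (hn : 1 ≤ n) (σ lam α τ za zt : ℝ)
    (hσ : 0 < σ) (hlam : 0 < lam)
    (hα : α ∈ Set.Ioo (0:ℝ) 1) (hτ : τ ∈ Set.Ioo (0:ℝ) 1)
    (hza : Phi (-za) = α / 2) (hzt : Phi (-zt) = τ / 2)
    (hC1 : α ≤ τ) (hC2 : τ < 2 * Phi (-(za / 2)) - α)
    (hlamLB : za * σ / Real.sqrt n < Real.sqrt lam)
    (hlamUB : Real.sqrt lam < (za + zt) * σ / Real.sqrt n)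
    (c₁ : ℝ) (hc₁pos : 0 < c₁)
    (hc₁ : c₁ = Real.sqrt lam - za * sigTilde lam σ c₁ / Real.sqrt n) :
    ∀ θ ∈ Set.Icc (0:ℝ) c₁,
      1 - α / τ ≤ Delta n σ lam α za zt θ ∧
      (α < τ → 0 < Delta n σ lam α za zt θ) := by
  obtain ⟨hα0, hα1⟩ := hα
  obtain ⟨hτ0, hτ1⟩ := hτ
  have hn0 : (0:ℝ) < Real.sqrt n := Real.sqrt_pos.mpr (by exact_mod_cast hn)
  have hn0' : Real.sqrt n ≠ 0 := ne_of_gt hn0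
  have hσ0 : σ ≠ 0 := ne_of_gt hσ
  have hza0 : 0 < za := by
    have h1 : Phi (-za) < Phi 0 := by rw [hza, Phi_zero]; linarith
    have := Phi_strictMono.lt_iff_lt.mp h1
    linarith
  have hzt0 : 0 < zt := by
    have h1 : Phi (-zt) < Phi 0 := by rw [hzt, Phi_zero]; linarith
    have := Phi_strictMono.lt_iff_lt.mp h1
    linarith
  have hztza : zt ≤ za := by
    have h1 : Phi (-za) ≤ Phi (-zt) := by rw [hza, hzt]; linarith
    have := Phi_strictMono.le_iff_le.mp h1
    linarith
  have hlam0 : 0 < Real.sqrt lam := Real.sqrt_pos.mpr hlam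
  intro θ hθ
  obtain ⟨hθ0, hθc⟩ := hθ
  have hstc : 0 < sigTilde lam σ c₁ := sigTilde_pos hσ hlam.le (ne_of_gt hc₁pos)
  have hstθ0 : 0 ≤ sigTilde lam σ θ := sigTilde_nonneg hσ.le hlam.le θ
  have hstθσ : sigTilde lam σ θ ≤ σ := sigTilde_le hσ.le hlam.le θ
  have hstθm : sigTilde lam σ θ ≤ sigTilde lam σ c₁ := sigTilde_mono hσ.le hlam.le hθ0 hθc
  have hc₁lt : c₁ < Real.sqrt lam := by
    have h1 : 0 < za * sigTilde lam σ c₁ / Real.sqrt n := by positivity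
    linarith [hc₁]
  have hθlt : θ < Real.sqrt lam := lt_of_le_of_lt hθc hc₁lt
  have hzast0 : 0 ≤ za * sigTilde lam σ θ / Real.sqrt n := by positivity
  have hzastle : za * sigTilde lam σ θ / Real.sqrt n ≤ za * σ / Real.sqrt n := by gcongr
  have hzastlt : za * sigTilde lam σ θ / Real.sqrt n < Real.sqrt lam :=
    lt_of_le_of_lt hzastle hlamLB
  have hθub : θ ≤ Real.sqrt lam - za * sigTilde lam σ θ / Real.sqrt n := by
    have h1 : za * sigTilde lam σ θ / Real.sqrt n
        ≤ za * sigTilde lam σ c₁ / Real.sqrt n := by gcongr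
    calc θ ≤ c₁ := hθc
      _ = Real.sqrt lam - za * sigTilde lam σ c₁ / Real.sqrt n := hc₁
      _ ≤ _ := by linarith
  -- CRa at ν₀ vanishes
  have hCRa0 : CRa n σ lam za θ (Real.sqrt lam) = 0 := by
    unfold CRa
    by_cases hb1 : θ < |Real.sqrt lam - za * sigTilde lam σ θ / Real.sqrt n|
    · rw [if_pos hb1, if_neg (not_lt.mpr hzastlt.le), mul_zero]
    · rw [if_neg hb1]
      rw [abs_of_nonneg (by linarith)] at hb1
      have heq : Real.sqrt lam - θ = za * sigTilde lam σ θ / Real.sqrt n := by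
        have h2 := not_lt.mp hb1
        linarith [hθub]
      rw [if_pos (by linarith : θ ≤ Real.sqrt lam + za * sigTilde lam σ θ / Real.sqrt n)]
      have h3 : Real.sqrt n * (Real.sqrt lam - θ) / σ = za * sigTilde lam σ θ / σ := by
        rw [heq]
        field_simp
      rw [h3, sub_self]
  -- CRa at ν₂ vanishes
  have hCRa2 : CRa n σ lam za θ (Real.sqrt lam + za * σ / Real.sqrt n) = 0 := by
    unfold CRa
    have h1 : θ < |Real.sqrt lam + za * σ / Real.sqrt n - za * sigTilde lam σ θ / Real.sqrt n| := by
      rw [abs_of_nonneg (by linarith [hzastle] : (0:ℝ) ≤ Real.sqrt lam + za * σ / Real.sqrt n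
        - za * sigTilde lam σ θ / Real.sqrt n)]
      linarith [hzastle]
    have h2 : ¬ (Real.sqrt lam + za * σ / Real.sqrt n
        < za * sigTilde lam σ θ / Real.sqrt n) := by
      push_neg
      linarith [hzastle]
    rw [if_pos h1, if_neg h2, mul_zero]
  -- CRb at ν₂ vanishes
  have hCRb2 : CRb n σ α za θ (Real.sqrt lam + za * σ / Real.sqrt n) = 0 := by
    unfold CRb
    have h1 : θ < |Real.sqrt lam + za * σ / Real.sqrt n - za * σ / Real.sqrt n| := by
      rw [show Real.sqrt lam + za * σ / Real.sqrt n - za * σ / Real.sqrt n = Real.sqrt lam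
        by ring, abs_of_nonneg hlam0.le]
      exact hθlt
    have h2 : ¬ (Real.sqrt lam + za * σ / Real.sqrt n < za * σ / Real.sqrt n) := by
      push_neg; linarith
    rw [if_pos h1, if_neg h2, mul_zero]
  have hCR1 : CR1 n σ lam za θ = 0 := by unfold CR1; rw [hCRa0, zero_div]
  -- the argument simplifications for Ps at ν₁
  set v := Real.sqrt n * θ / σ with hvdef
  have hv0 : 0 ≤ v := by positivity
  have e1 : Real.sqrt n * (θ - zt * σ / Real.sqrt n) / σ = v - zt := by
    rw [hvdef]; field_simp
  have e2 : Real.sqrt n * (-θ - zt * σ / Real.sqrt n) / σ = -v - zt := by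
    rw [hvdef]; field_simp
  have hPs_eq : Ps n σ θ (zt * σ / Real.sqrt n) = Phi (v - zt) + Phi (-v - zt) := by
    unfold Ps; rw [e1, e2]
  have hPsτ : τ ≤ Ps n σ θ (zt * σ / Real.sqrt n) := by
    rw [hPs_eq]
    have h1 := Phi_key hv0 hzt0.le
    rw [hzt] at h1
    linarith
  have hPs0 : 0 < Ps n σ θ (zt * σ / Real.sqrt n) := lt_of_lt_of_le hτ0 hPsτ
  have hΔ : Delta n σ lam α za zt θ
      = CRb n σ α za θ (zt * σ / Real.sqrt n) / Ps n σ θ (zt * σ / Real.sqrt n) := by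
    unfold Delta CRtwo
    rw [hCR1, hCRa2, hCRb2]
    ring
  have hmain : 1 - α / τ ≤ Delta n σ lam α za zt θ := by
    rw [hΔ]
    by_cases hcase : θ < |zt * σ / Real.sqrt n - za * σ / Real.sqrt n|
    · -- case A : small θ, indicator branch
      have hne : zt * σ / Real.sqrt n < za * σ / Real.sqrt n := by
        rcases lt_or_eq_of_le (show zt * σ / Real.sqrt n ≤ za * σ / Real.sqrt n by gcongr)
          with h | h
        · exact h
        · exfalso; rw [h, sub_self, abs_zero] at hcase; linarith
      have hCRbA : CRb n σ α za θ (zt * σ / Real.sqrt n)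
          = Ps n σ θ (zt * σ / Real.sqrt n) - α := by
        unfold CRb; rw [if_pos hcase, if_pos hne, mul_one]
      rw [hCRbA, sub_div, div_self (ne_of_gt hPs0)]
      have hdiv : α / Ps n σ θ (zt * σ / Real.sqrt n) ≤ α / τ := by gcongr
      linarith
    · -- case B : middle branch of CRb
      push_neg at hcase
      have h0le : zt * σ / Real.sqrt n ≤ za * σ / Real.sqrt n := by gcongr
      have hge : za * σ / Real.sqrt n - zt * σ / Real.sqrt n ≤ θ := by
        have habs : |zt * σ / Real.sqrt n - za * σ / Real.sqrt n|
            = za * σ / Real.sqrt n - zt * σ / Real.sqrt n := by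
          rw [abs_of_nonpos (by linarith)]; ring
        rw [habs] at hcase; exact hcase
      have hθub2 : θ ≤ zt * σ / Real.sqrt n + za * σ / Real.sqrt n := by
        have h2 : (za + zt) * σ / Real.sqrt n
            = zt * σ / Real.sqrt n + za * σ / Real.sqrt n := by ring
        linarith [hθlt, hlamUB]
      have e3 : Real.sqrt n * (zt * σ / Real.sqrt n - θ) / σ = zt - v := by
        rw [hvdef]; field_simp
      have hCRbB : CRb n σ α za θ (zt * σ / Real.sqrt n) = 1 - α / 2 - Phi (zt - v) := by
        unfold CRb
        rw [if_neg (not_lt.mpr hcase), if_pos hθub2, e3]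
      have hvge : za - zt ≤ v := by
        rw [hvdef, le_div_iff₀ hσ]
        have h6 := mul_le_mul_of_nonneg_left hge hn0.le
        have h7 : Real.sqrt n * (za * σ / Real.sqrt n - zt * σ / Real.sqrt n)
            = (za - zt) * σ := by field_simp
        linarith [h6, h7]
      have hB : Phi (-v - zt) ≤ α / 2 := by
        rw [← hza]
        exact Phi_strictMono.monotone (by linarith)
      have hA : Phi (zt - v) = 1 - Phi (v - zt) := by
        have h8 := Phi_add_Phi_neg (v - zt)
        rw [show -(v - zt) = zt - v by ring] at h8
        linarith
      rw [hCRbB, hPs_eq, hA]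
      have hABpos : 0 < Phi (v - zt) + Phi (-v - zt) := by rw [← hPs_eq]; exact hPs0
      rw [le_div_iff₀ hABpos]
      have hPsτ' : τ ≤ Phi (v - zt) + Phi (-v - zt) := by rw [← hPs_eq]; exact hPsτ
      have hmul : α / τ * τ ≤ α / τ * (Phi (v - zt) + Phi (-v - zt)) :=
        mul_le_mul_of_nonneg_left hPsτ' (by positivity)
      have hcan : α / τ * τ = α := div_mul_cancel₀ α (ne_of_gt hτ0)
      have hexp : (1 - α / τ) * (Phi (v - zt) + Phi (-v - zt))
          = (Phi (v - zt) + Phi (-v - zt)) - α / τ * (Phi (v - zt) + Phi (-v - zt)) := by ring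
      linarith [hexp, hmul, hcan, hB]
  exact ⟨hmain, fun hlt => by
    have h1 : α / τ < 1 := (div_lt_one hτ0).mpr hlt
    linarith⟩
end
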